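/- Let λ be a pre-averaging function. There exists a constant C depending only on λ such that for all integers 1 ≤ m ≤ n, every sequence (b_j)_{0≤j≤n} of real numbers, and every function g: [0,1] → ℝ, |Σ_{i=2}^m g((i−1)/m)·Σ_{j: j/n ∈ ((i−2)/m, i/m]} λ̃²(m·j/n − (i−2))·(b_j − b_{j−1})| ≤ C·(max_{0≤j≤n} |b_j|)·m·|g|_{1,m}. -/

import Mathlib

open MeasureTheory ProbabilityTheory Real

/-- `λ̄ := (2∫₀¹ (∫₀ˢ λ(u) du)² ds)^{1/2}`. -/
noncomputable def lamBar (lam : ℝ → ℝ) : ℝ :=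
  Real.sqrt (2 * ∫ s in (0:ℝ)..1, (∫ u in (0:ℝ)..s, lam u) ^ 2)

/-- The normalized pre-averaging function `λ̃ := λ / λ̄`. -/
noncomputable def lamTilde (lam : ℝ → ℝ) (t : ℝ) : ℝ := lam t / lamBar lam

/-- A pre-averaging function: `λ : [0,2) → ℝ` (extended by `0` outside `[0,2)`)
piecewise Lipschitz, antisymmetric `λ(t) = −λ(2−t)` on `(0,2)`, not identically
zero. -/
def IsPreAveraging (lam : ℝ → ℝ) : Prop :=
  (∀ t : ℝ, t < 0 ∨ 2 ≤ t → lam t = 0) ∧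
  (∀ t ∈ Set.Ioo (0:ℝ) 2, lam t = - lam (2 - t)) ∧
  (∃ (N : ℕ) (a : ℕ → ℝ), 0 < N ∧ a 0 = 0 ∧ a N = 2 ∧ (∀ i < N, a i < a (i + 1)) ∧
    ∀ i < N, ∃ K : NNReal, LipschitzOnWith K lam (Set.Ioo (a i) (a (i + 1)))) ∧
  (∃ t, lam t ≠ 0)

/-- `Λ(s) := (∫ₛ² λ̃(u) du)·1_{[0,2]}(s)`. -/
noncomputable def bigLambda (lam : ℝ → ℝ) (s : ℝ) : ℝ :=
  Set.indicator (Set.Icc (0:ℝ) 2) (fun s' => ∫ u in s'..2, lamTilde lam u) s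

/-- `Λ̄(s) := ((∫₀ˢ λ̃)² + (∫₀^{1−s} λ̃)²)^{1/2}·1_{[0,1]}(s)`. -/
noncomputable def bigLambdaBar (lam : ℝ → ℝ) (s : ℝ) : ℝ :=
  Set.indicator (Set.Icc (0:ℝ) 1)
    (fun s' => Real.sqrt ((∫ u in (0:ℝ)..s', lamTilde lam u) ^ 2 +
      (∫ u in (0:ℝ)..(1 - s'), lamTilde lam u) ^ 2)) s

open Classical in
/-- The indices `j ∈ {0,…,n}` with `j/n ∈ ((i−2)/m, i/m]`. -/
noncomputable def window (n m i : ℕ) : Finset ℕ :=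
  (Finset.range (n + 1)).filter
    (fun j => ((i : ℝ) - 2) / m < (j : ℝ) / n ∧ (j : ℝ) / n ≤ (i : ℝ) / m)

/-- The grid norm `|g|_{p,m} := (m⁻¹ Σ_{i=1}^m |g((i−1)/m)|^p)^{1/p}`. -/
noncomputable def gridNorm (g : ℝ → ℝ) (p : ℝ) (m : ℕ) : ℝ :=
  ((m : ℝ)⁻¹ * ∑ i ∈ Finset.Icc 1 m, |g (((i : ℝ) - 1) / m)| ^ p) ^ (1 / p)

set_option maxHeartbeats 1000000


lemma locate_piece (N : ℕ) (a : ℕ → ℝ) (ha0 : a 0 = 0) (haN : a N = 2)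
    (s : ℝ) (hs0 : 0 < s) (hs2 : s < 2) (hsne : ∀ k ≤ N, a k ≠ s) :
    ∃ k, k < N ∧ a k < s ∧ s < a (k+1) := by
  classical
  have hFne : ((Finset.range (N+1)).filter (fun k => a k < s)).Nonempty :=
    ⟨0, by simp [ha0, hs0]⟩
  obtain ⟨k, hkmem, hkmax⟩ :
      ∃ k ∈ (Finset.range (N+1)).filter (fun k => a k < s),
        ∀ l ∈ (Finset.range (N+1)).filter (fun k => a k < s), l ≤ k :=
    ⟨_, Finset.max'_mem _ hFne, fun l hl => Finset.le_max' _ l hl⟩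
  rw [Finset.mem_filter, Finset.mem_range, Nat.lt_succ_iff] at hkmem
  have hkN : k < N := by
    rcases lt_or_eq_of_le hkmem.1 with h | h
    · exact h
    · exfalso; rw [h, haN] at hkmem; linarith [hkmem.2]
  refine ⟨k, hkN, hkmem.2, ?_⟩
  by_contra hcon
  push_neg at hcon
  have hlt : a (k+1) < s := lt_of_le_of_ne hcon (hsne (k+1) (by omega))
  have : k + 1 ∈ (Finset.range (N+1)).filter (fun k => a k < s) := by
    rw [Finset.mem_filter, Finset.mem_range]
    exact ⟨by omega, hlt⟩
  have := hkmax _ this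
  omega

lemma abel_icc (w b : ℕ → ℝ) (p : ℕ) (hp : 1 ≤ p) : ∀ q, p ≤ q →
    ∑ j ∈ Finset.Icc p q, w j * (b j - b (j-1)) =
      w q * b q - w p * b (p-1) + ∑ j ∈ Finset.Icc p (q-1), (w j - w (j+1)) * b j := by
  intro q hq
  induction q, hq using Nat.le_induction with
  | base =>
      rw [Finset.Icc_self, Finset.Icc_eq_empty (by omega), Finset.sum_singleton,
        Finset.sum_empty]
      ring
  | succ q hq ih =>
      rw [Finset.sum_Icc_succ_top (by omega : p ≤ q + 1), ih,
        show q + 1 - 1 = (q - 1) + 1 from by omega,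
        Finset.sum_Icc_succ_top (by omega : p ≤ q - 1 + 1),
        show q - 1 + 1 = q from by omega]
      ring

lemma window_sum_bound (f : ℝ → ℝ) (Mf L : ℝ) (N : ℕ) (a : ℕ → ℝ)
    (hMf : ∀ t, |f t| ≤ Mf) (hL : 0 ≤ L)
    (ha0 : a 0 = 0) (haN : a N = 2)
    (hlip : ∀ k < N, ∀ s ∈ Set.Ioo (a k) (a (k+1)), ∀ t ∈ Set.Ioo (a k) (a (k+1)),
        |f s - f t| ≤ L * |s - t|)
    (m n i : ℕ) (him : 2 ≤ i) (hi : i ≤ m) (hmn : m ≤ n)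
    (b : ℕ → ℝ) (Bmax : ℝ) (hb : ∀ j ≤ n, |b j| ≤ Bmax) :
    |∑ j ∈ window n m i, f ((m:ℝ)*j/n - ((i:ℝ)-2)) * (b j - b (j-1))|
      ≤ (2*Mf + 2*L + 4*((N:ℝ)+1)*Mf) * Bmax := by
  classical
  have hMf0 : 0 ≤ Mf := le_trans (abs_nonneg _) (hMf 0)
  have hB0 : 0 ≤ Bmax := le_trans (abs_nonneg _) (hb 0 (Nat.zero_le n))
  have hm : 1 ≤ m := le_trans (by omega) hi
  have hn : 1 ≤ n := le_trans hm hmn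
  have hnR : (0:ℝ) < n := by exact_mod_cast hn
  have hmR : (0:ℝ) < m := by exact_mod_cast hm
  have hiR : (2:ℝ) ≤ i := by exact_mod_cast him
  set t : ℕ → ℝ := fun j => (m:ℝ)*j/n - ((i:ℝ)-2) with ht
  have hmem : ∀ j, j ∈ window n m i ↔
      j ≤ n ∧ ((i:ℝ)-2)/m < (j:ℝ)/n ∧ (j:ℝ)/n ≤ (i:ℝ)/m := by
    intro j
    simp [window, Finset.mem_filter, Finset.mem_range, Nat.lt_succ_iff, and_assoc]
  rcases (window n m i).eq_empty_or_nonempty with he | hne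
  · rw [he, Finset.sum_empty, abs_zero]; positivity
  set j₀ := (window n m i).min' hne with hj₀
  set j₁ := (window n m i).max' hne with hj₁
  have hj₀w := (window n m i).min'_mem hne
  have hj₁w := (window n m i).max'_mem hne
  have hj₀₁ : j₀ ≤ j₁ := Finset.min'_le _ _ hj₁w
  have hpos : ∀ j ∈ window n m i, 0 < t j := by
    intro j hj
    have h := ((hmem j).1 hj).2.1
    rw [div_lt_div_iff₀ hmR hnR] at h
    have : ((i:ℝ)-2) < (m:ℝ)*j/n := by
      rw [lt_div_iff₀ hnR]; nlinarith
    simpa [ht, sub_pos] using this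
  have hle2 : ∀ j ∈ window n m i, t j ≤ 2 := by
    intro j hj
    have h := ((hmem j).1 hj).2.2
    rw [div_le_div_iff₀ hnR hmR] at h
    have : (m:ℝ)*j/n ≤ i := by
      rw [div_le_iff₀ hnR]; nlinarith
    simp only [ht]; linarith
  have hjn : ∀ j ∈ window n m i, j ≤ n := fun j hj => ((hmem j).1 hj).1
  have htmono : ∀ j j' : ℕ, j ≤ j' → t j ≤ t j' := by
    intro j j' h
    have : (j:ℝ) ≤ j' := by exact_mod_cast h
    simp only [ht]
    gcongr
  have htstrict : ∀ j j' : ℕ, j < j' → t j < t j' := by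
    intro j j' h
    have : (j:ℝ) < j' := by exact_mod_cast h
    simp only [ht]
    gcongr
  have hwin_eq : window n m i = Finset.Icc j₀ j₁ := by
    ext j
    rw [Finset.mem_Icc]
    constructor
    · exact fun hj => ⟨Finset.min'_le _ _ hj, Finset.le_max' _ _ hj⟩
    · rintro ⟨h1, h2⟩
      refine (hmem j).2 ⟨le_trans h2 (hjn _ hj₁w), ?_, ?_⟩
      · refine lt_of_lt_of_le ((hmem j₀).1 hj₀w).2.1 ?_
        have : (j₀:ℝ) ≤ j := by exact_mod_cast h1
        gcongr
      · refine le_trans ?_ ((hmem j₁).1 hj₁w).2.2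
        have : (j:ℝ) ≤ j₁ := by exact_mod_cast h2
        gcongr
  have hj₀1 : 1 ≤ j₀ := by
    rcases Nat.eq_zero_or_pos j₀ with h0 | h; swap
    · exact h
    exfalso
    have := hpos j₀ hj₀w
    rw [h0] at this
    simp only [ht, Nat.cast_zero, mul_zero, zero_div, zero_sub, neg_pos, sub_neg] at this
    linarith
  set δ : ℝ := (m:ℝ)/n with hδ
  have hδ0 : 0 < δ := by positivity
  have htstep : ∀ j : ℕ, t (j+1) = t j + δ := by
    intro j
    simp only [ht, hδ]
    push_cast
    ring
  -- locate lemma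
  have hNpos : 0 < N := by
    rcases Nat.eq_zero_or_pos N with h0 | h
    · exfalso; rw [h0, ha0] at haN; norm_num at haN
    · exact h
  have hlocate : ∀ s : ℝ, 0 < s → s < 2 → (∀ k ≤ N, a k ≠ s) →
      ∃ k, k < N ∧ a k < s ∧ s < a (k+1) := fun s h1 h2 h3 =>
    locate_piece N a ha0 haN s h1 h2 h3
  set c : ℕ → ℕ := fun j =>
    ((Finset.range (N+1)).filter (fun k => t j ≤ a k ∧ a k ≤ t (j+1))).card with hc
  set D := Finset.Icc j₀ (j₁ - 1) with hD
  have hDmem : ∀ j ∈ D, j ∈ window n m i ∧ (j+1) ∈ window n m i := by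
    intro j hj
    rw [hD, Finset.mem_Icc] at hj
    constructor
    · rw [hwin_eq, Finset.mem_Icc]; omega
    · rw [hwin_eq, Finset.mem_Icc]; omega
  have hstep : ∀ j ∈ D, |f (t j) - f (t (j+1))| ≤ L*δ + 2*Mf*(c j : ℝ) := by
    intro j hj
    obtain ⟨hjw, hj1w⟩ := hDmem j hj
    have htj0 : 0 < t j := hpos j hjw
    have htj12 : t (j+1) ≤ 2 := hle2 _ hj1w
    have htjle : t j ≤ t (j+1) := htmono _ _ (by omega)
    by_cases hex : ∃ k ≤ N, t j ≤ a k ∧ a k ≤ t (j+1)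
    · obtain ⟨k, hkN, hk1, hk2⟩ := hex
      have hc1 : 1 ≤ (c j : ℝ) := by
        have : 0 < c j := Finset.card_pos.2 ⟨k, by
          rw [Finset.mem_filter, Finset.mem_range]
          exact ⟨by omega, hk1, hk2⟩⟩
        exact_mod_cast this
      have h1 : |f (t j) - f (t (j+1))| ≤ 2 * Mf := by
        calc |f (t j) - f (t (j+1))| ≤ |f (t j)| + |f (t (j+1))| := abs_sub _ _
        _ ≤ 2 * Mf := by linarith [hMf (t j), hMf (t (j+1))]
      nlinarith [mul_pos hδ0 (lt_of_lt_of_le zero_lt_one (le_refl (1:ℝ)))]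
    · push_neg at hex
      have h2' : t (j+1) < 2 := by
        have := hex N le_rfl (by rw [haN]; exact le_trans htjle htj12)
        rwa [haN] at this
      have hne' : ∀ k ≤ N, a k ≠ t j := by
        intro k hk heq
        have := hex k hk (le_of_eq heq.symm)
        rw [heq] at this
        linarith
      obtain ⟨k, hkN, hak, hak1⟩ := hlocate (t j) htj0 (lt_of_le_of_lt htjle h2') hne'
      have hup : t (j+1) < a (k+1) := hex (k+1) (by omega) (le_of_lt hak1)
      have hmem1 : t j ∈ Set.Ioo (a k) (a (k+1)) := ⟨hak, hak1⟩
      have hmem2 : t (j+1) ∈ Set.Ioo (a k) (a (k+1)) := ⟨lt_of_lt_of_le hak htjle, hup⟩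
      have := hlip k hkN _ hmem1 _ hmem2
      have habs : |t j - t (j+1)| = δ := by
        rw [htstep j]; rw [abs_sub_comm]; simp [abs_of_pos hδ0]
      rw [habs] at this
      have : (0:ℝ) ≤ 2*Mf*(c j : ℝ) := mul_nonneg (mul_nonneg zero_le_two hMf0) (Nat.cast_nonneg _)
      linarith [hlip k hkN _ hmem1 _ hmem2, habs ▸ (hlip k hkN _ hmem1 _ hmem2)]
  -- count bound
  have hcount : ∑ j ∈ D, c j ≤ 2 * (N + 1) := by
    have hsw : ∑ j ∈ D, c j
        = ∑ k ∈ Finset.range (N+1),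
            (D.filter (fun j => t j ≤ a k ∧ a k ≤ t (j+1))).card := by
      simp only [hc, Finset.card_filter]
      rw [Finset.sum_comm]
    rw [hsw]
    have hper : ∀ k ∈ Finset.range (N+1),
        (D.filter (fun j => t j ≤ a k ∧ a k ≤ t (j+1))).card ≤ 2 := by
      intro k _
      rcases (D.filter (fun j => t j ≤ a k ∧ a k ≤ t (j+1))).eq_empty_or_nonempty with h | hSne
      · rw [h]; simp
      obtain ⟨js, hjsmem, hjsmin⟩ :
          ∃ x ∈ D.filter (fun j => t j ≤ a k ∧ a k ≤ t (j+1)),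
            ∀ y ∈ D.filter (fun j => t j ≤ a k ∧ a k ≤ t (j+1)), x ≤ y :=
        ⟨_, Finset.min'_mem _ hSne, fun y hy => Finset.min'_le _ y hy⟩
      have hsub : D.filter (fun j => t j ≤ a k ∧ a k ≤ t (j+1)) ⊆ {js, js+1} := by
        intro j hj
        rw [Finset.mem_insert, Finset.mem_singleton]
        by_contra hcon
        push_neg at hcon
        have h1 : js + 2 ≤ j := by have := hjsmin j hj; omega
        have h2 : a k ≤ t (js+1) := (Finset.mem_filter.1 hjsmem).2.2
        have h3 : t j ≤ a k := (Finset.mem_filter.1 hj).2.1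
        have := htstrict (js+1) j (by omega)
        linarith
      calc (D.filter (fun j => t j ≤ a k ∧ a k ≤ t (j+1))).card
          ≤ ({js, js+1} : Finset ℕ).card := Finset.card_le_card hsub
        _ ≤ 2 := by
            refine le_trans (Finset.card_insert_le _ _) ?_
            simp
    calc ∑ k ∈ Finset.range (N+1),
          (D.filter (fun j => t j ≤ a k ∧ a k ≤ t (j+1))).card
        ≤ ∑ _k ∈ Finset.range (N+1), 2 := Finset.sum_le_sum hper
      _ = 2 * (N + 1) := by simp [mul_comm]
  have hsumc : ∑ j ∈ D, (c j : ℝ) ≤ 2*((N:ℝ)+1) := by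
    have := (Nat.cast_le (α := ℝ)).2 hcount
    push_cast at this
    convert this using 2 <;> push_cast <;> ring
  have hDδ : δ * (D.card : ℝ) ≤ 2 := by
    have hcard : D.card = j₁ - j₀ := by rw [hD, Nat.card_Icc]; omega
    have hcast : (D.card : ℝ) = (j₁ : ℝ) - (j₀ : ℝ) := by
      rw [hcard, Nat.cast_sub hj₀₁]
    have h1 : t j₁ - t j₀ = ((j₁:ℝ) - (j₀:ℝ)) * δ := by
      simp only [ht, hδ]
      ring
    have h2 := hpos j₀ hj₀w
    have h3 := hle2 j₁ hj₁w
    rw [hcast]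
    nlinarith
  -- boundary terms
  have hA : |f (t j₁) * b j₁| ≤ Mf * Bmax := by
    rw [abs_mul]
    exact mul_le_mul (hMf _) (hb _ (hjn _ hj₁w)) (abs_nonneg _) hMf0
  have hBb : |f (t j₀) * b (j₀ - 1)| ≤ Mf * Bmax := by
    rw [abs_mul]
    refine mul_le_mul (hMf _) (hb _ ?_) (abs_nonneg _) hMf0
    have := hjn _ hj₀w; omega
  -- variation sum
  have hS : |∑ j ∈ D, (f (t j) - f (t (j+1))) * b j|
      ≤ (2*L + 4*((N:ℝ)+1)*Mf) * Bmax := by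
    calc |∑ j ∈ D, (f (t j) - f (t (j+1))) * b j|
        ≤ ∑ j ∈ D, |(f (t j) - f (t (j+1))) * b j| := Finset.abs_sum_le_sum_abs _ _
      _ ≤ ∑ j ∈ D, (L*δ + 2*Mf*(c j : ℝ)) * Bmax := by
          refine Finset.sum_le_sum fun j hj => ?_
          rw [abs_mul]
          refine mul_le_mul (hstep j hj) (hb j ?_) (abs_nonneg _) ?_
          · have := hjn _ (hDmem j hj).2; omega
          · exact le_trans (abs_nonneg _) (hstep j hj)
      _ = (L*(δ * (D.card : ℝ)) + 2*Mf*(∑ j ∈ D, (c j:ℝ))) * Bmax := by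
          rw [← Finset.sum_mul]
          congr 1
          rw [Finset.sum_add_distrib, Finset.sum_const, nsmul_eq_mul, ← Finset.mul_sum]
          ring
      _ ≤ (L*2 + 2*Mf*(2*((N:ℝ)+1))) * Bmax := by
          refine mul_le_mul_of_nonneg_right ?_ hB0
          have h1 : L*(δ * (D.card : ℝ)) ≤ L*2 := mul_le_mul_of_nonneg_left hDδ hL
          have h2 : 2*Mf*(∑ j ∈ D, (c j:ℝ)) ≤ 2*Mf*(2*((N:ℝ)+1)) :=
            mul_le_mul_of_nonneg_left hsumc (by positivity)
          linarith
      _ = (2*L + 4*((N:ℝ)+1)*Mf) * Bmax := by ring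
  -- conclusion
  have habel := abel_icc (fun j => f (t j)) b j₀ hj₀1 j₁ hj₀₁
  have hgoal_eq : ∑ j ∈ window n m i, f ((m:ℝ)*j/n - ((i:ℝ)-2)) * (b j - b (j-1))
      = f (t j₁) * b j₁ - f (t j₀) * b (j₀-1)
        + ∑ j ∈ D, (f (t j) - f (t (j+1))) * b j := by
    rw [hwin_eq]
    exact habel
  rw [hgoal_eq]
  calc |f (t j₁) * b j₁ - f (t j₀) * b (j₀-1) + ∑ j ∈ D, (f (t j) - f (t (j+1))) * b j|
      ≤ |f (t j₁) * b j₁ - f (t j₀) * b (j₀-1)|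
        + |∑ j ∈ D, (f (t j) - f (t (j+1))) * b j| := abs_add_le _ _
    _ ≤ (|f (t j₁) * b j₁| + |f (t j₀) * b (j₀-1)|)
        + |∑ j ∈ D, (f (t j) - f (t (j+1))) * b j| := by
        have := abs_sub (f (t j₁) * b j₁) (f (t j₀) * b (j₀-1))
        linarith
    _ ≤ (Mf * Bmax + Mf * Bmax) + (2*L + 4*((N:ℝ)+1)*Mf) * Bmax := by
        linarith
    _ = (2*Mf + 2*L + 4*((N:ℝ)+1)*Mf) * Bmax := by ring

/-- Summation-by-parts bound: there is `C` depending only on `λ` such that for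
all `1 ≤ m ≤ n`, every sequence `(b_j)_{0≤j≤n}` bounded by `Bmax` and every
`g : [0,1] → ℝ`,
`|Σ_{i=2}^m g((i−1)/m) Σ_{j/n ∈ ((i−2)/m, i/m]} λ̃²(mj/n−(i−2)) (b_j − b_{j−1})|
  ≤ C Bmax m |g|_{1,m}`. -/
theorem abel_summation_lamTilde_sq (lam : ℝ → ℝ) (hlam : IsPreAveraging lam) :
    ∃ C : ℝ, 0 < C ∧ ∀ m n : ℕ, 1 ≤ m → m ≤ n →
      ∀ (b : ℕ → ℝ) (Bmax : ℝ), (∀ j ≤ n, |b j| ≤ Bmax) →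
      ∀ g : ℝ → ℝ,
      |∑ i ∈ Finset.Icc 2 m, g (((i : ℝ) - 1) / m) *
          ∑ j ∈ window n m i,
            (lamTilde lam ((m : ℝ) * j / n - ((i : ℝ) - 2))) ^ 2
              * (b j - b (j - 1))|
        ≤ C * Bmax * m * gridNorm g 1 m := by
  classical
  obtain ⟨hzero, -, ⟨N, a, hN, ha0, haN, hltN, hlip⟩, -⟩ := hlam
  have hKex : ∀ k : ℕ, ∃ K : NNReal, k < N →
      LipschitzOnWith K lam (Set.Ioo (a k) (a (k+1))) := by
    intro k
    by_cases h : k < N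
    · obtain ⟨K, hK⟩ := hlip k h; exact ⟨K, fun _ => hK⟩
    · exact ⟨0, fun h' => absurd h' h⟩
  choose K hK using hKex
  have haMONO : ∀ k l, k ≤ l → l ≤ N → a k ≤ a l := by
    intro k l hkl
    induction l, hkl using Nat.le_induction with
    | base => intro _; exact le_refl _
    | succ l hkl ih =>
        intro hlN
        exact le_trans (ih (by omega)) (le_of_lt (hltN l (by omega)))
  have harange : ∀ k ≤ N, 0 ≤ a k ∧ a k ≤ 2 := fun k hk =>
    ⟨ha0 ▸ haMONO 0 k (Nat.zero_le _) hk, haN ▸ haMONO k N hk le_rfl⟩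
  set mid : ℕ → ℝ := fun k => (a k + a (k+1))/2 with hmid
  have hrangene : (Finset.range (N+1)).Nonempty := ⟨0, by simp⟩
  set Mlam : ℝ := (Finset.range (N+1)).sup' hrangene
      (fun k => max |lam (a k)| (|lam (mid k)| + 2 * (K k : ℝ))) with hMlam
  have hMb : ∀ s, |lam s| ≤ Mlam := by
    intro s
    by_cases h1 : 0 ≤ s ∧ s < 2
    · by_cases h2 : ∃ k ≤ N, a k = s
      · obtain ⟨k, hk, rfl⟩ := h2
        have hmemk : k ∈ Finset.range (N+1) := Finset.mem_range.2 (by omega)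
        rw [hMlam]
        exact le_trans (le_max_left _ _) (Finset.le_sup' (fun k => max |lam (a k)| (|lam (mid k)| + 2 * (K k : ℝ))) hmemk)
      · push_neg at h2
        have hs0 : 0 < s := by
          have h0ne : (0:ℝ) ≠ s := by
            have := h2 0 (Nat.zero_le _)
            rwa [ha0] at this
          exact lt_of_le_of_ne h1.1 h0ne
        obtain ⟨k, hkN, hl, hr⟩ := locate_piece N a ha0 haN s hs0 h1.2
          (fun k hk => h2 k hk)
        have hmidmem : mid k ∈ Set.Ioo (a k) (a (k+1)) := by
          constructor
          · simp only [hmid]; linarith [hltN k hkN]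
          · simp only [hmid]; linarith [hltN k hkN]
        have hdist := (hK k hkN).dist_le_mul s ⟨hl, hr⟩ (mid k) hmidmem
        rw [Real.dist_eq, Real.dist_eq] at hdist
        have hak := harange k (by omega)
        have hak1 := harange (k+1) (by omega)
        have hmidb : 0 ≤ mid k ∧ mid k ≤ 2 := by
          constructor
          · simp only [hmid]; linarith [hak.1, hak1.1]
          · simp only [hmid]; linarith [hak.2, hak1.2]
        have hsmid : |s - mid k| ≤ 2 :=
          abs_le.mpr ⟨by linarith [hmidb.2], by linarith [hmidb.1]⟩
        have h3 : |lam s| ≤ |lam (mid k)| + 2 * (K k : ℝ) := by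
          have h4 : |lam s| - |lam (mid k)| ≤ |lam s - lam (mid k)| :=
            abs_sub_abs_le_abs_sub _ _
          have h5 : (K k : ℝ) * |s - mid k| ≤ (K k : ℝ) * 2 :=
            mul_le_mul_of_nonneg_left hsmid (K k).coe_nonneg
          linarith
        have hmemk : k ∈ Finset.range (N+1) := Finset.mem_range.2 (by omega)
        rw [hMlam]
        exact le_trans h3 (le_trans (le_max_right _ _) (Finset.le_sup' (fun k => max |lam (a k)| (|lam (mid k)| + 2 * (K k : ℝ))) hmemk))
    · have : lam s = 0 := by
        apply hzero
        by_cases h : 0 ≤ s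
        · right; by_contra h2; push_neg at h2; exact h1 ⟨h, h2⟩
        · left; linarith [not_le.1 h]
      rw [this, abs_zero]
      have hmem0 : 0 ∈ Finset.range (N+1) := Finset.mem_range.2 (by omega)
      rw [hMlam]
      exact le_trans (abs_nonneg (lam (a 0)))
        (le_trans (le_max_left _ _) (Finset.le_sup' (fun k => max |lam (a k)| (|lam (mid k)| + 2 * (K k : ℝ))) hmem0))
  have hMlam0 : 0 ≤ Mlam := le_trans (abs_nonneg _) (hMb 0)
  set lb := |lamBar lam| with hlb
  have hlb0 : 0 ≤ lb := abs_nonneg _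
  set Mt : ℝ := Mlam / lb with hMt'
  have hMt0 : 0 ≤ Mt := div_nonneg hMlam0 hlb0
  have hdivmono : ∀ x y : ℝ, x ≤ y → x / lb ≤ y / lb := by
    intro x y h
    rcases eq_or_lt_of_le hlb0 with h0 | h0
    · rw [← h0]; simp
    · exact (div_le_div_iff_of_pos_right h0).2 h
  have hMt : ∀ s, |lamTilde lam s| ≤ Mt := by
    intro s
    rw [lamTilde, abs_div]
    exact hdivmono _ _ (hMb s)
  set KmaxR : ℝ := (Finset.range (N+1)).sup' hrangene (fun k => (K k : ℝ)) with hKmaxR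
  have hKmax0 : 0 ≤ KmaxR := by
    have hmem0 : 0 ∈ Finset.range (N+1) := Finset.mem_range.2 (by omega)
    rw [hKmaxR]
    exact le_trans (K 0).coe_nonneg (Finset.le_sup' (fun k => ((K k : ℝ))) hmem0)
  set L : ℝ := 2 * Mt * (KmaxR / lb) with hL'
  have hL : 0 ≤ L := by
    have := div_nonneg hKmax0 hlb0
    positivity
  set Mf : ℝ := Mt ^ 2 with hMf'
  have hMf0 : 0 ≤ Mf := sq_nonneg _
  have hMf : ∀ s, |(lamTilde lam s) ^ 2| ≤ Mf := by
    intro s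
    rw [abs_pow]
    exact pow_le_pow_left₀ (abs_nonneg _) (hMt s) 2
  have hlipf : ∀ k < N, ∀ s ∈ Set.Ioo (a k) (a (k+1)), ∀ u ∈ Set.Ioo (a k) (a (k+1)),
      |(lamTilde lam s) ^ 2 - (lamTilde lam u) ^ 2| ≤ L * |s - u| := by
    intro k hkN s hs u hu
    have hdiff : |lamTilde lam s - lamTilde lam u| ≤ (K k : ℝ) / lb * |s - u| := by
      have hdist := (hK k hkN).dist_le_mul s hs u hu
      rw [Real.dist_eq, Real.dist_eq] at hdist
      have : lamTilde lam s - lamTilde lam u = (lam s - lam u) / lamBar lam := by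
        rw [lamTilde, lamTilde]; ring
      rw [this, abs_div, ← hlb, div_mul_eq_mul_div]
      exact hdivmono _ _ hdist
    have hsumb : |lamTilde lam s + lamTilde lam u| ≤ 2 * Mt := by
      refine le_trans (abs_add_le _ _) ?_
      linarith [hMt s, hMt u]
    have hfact : (lamTilde lam s) ^ 2 - (lamTilde lam u) ^ 2
        = (lamTilde lam s - lamTilde lam u) * (lamTilde lam s + lamTilde lam u) := by ring
    rw [hfact, abs_mul]
    calc |lamTilde lam s - lamTilde lam u| * |lamTilde lam s + lamTilde lam u|
        ≤ ((K k : ℝ) / lb * |s - u|) * (2 * Mt) := by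
          refine mul_le_mul hdiff hsumb (abs_nonneg _) ?_
          positivity
      _ ≤ (KmaxR / lb * |s - u|) * (2 * Mt) := by
          have hKle : (K k : ℝ) ≤ KmaxR := by
            have hmemk : k ∈ Finset.range (N+1) := Finset.mem_range.2 (by omega)
            rw [hKmaxR]
            exact Finset.le_sup' (fun k => ((K k : ℝ))) hmemk
          have := hdivmono _ _ hKle
          have h2 : (K k : ℝ) / lb * |s - u| ≤ KmaxR / lb * |s - u| :=
            mul_le_mul_of_nonneg_right this (abs_nonneg _)
          nlinarith [abs_nonneg (s - u), hMt0]
      _ = L * |s - u| := by rw [hL']; ring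
  set C0 : ℝ := 2*Mf + 2*L + 4*((N:ℝ)+1)*Mf with hC0
  have hC00 : 0 ≤ C0 := by positivity
  refine ⟨C0 + 1, by linarith, ?_⟩
  intro m n hm hmn b Bmax hb g
  have hB0 : 0 ≤ Bmax := le_trans (abs_nonneg _) (hb 0 (Nat.zero_le _))
  have hkey : ∀ i ∈ Finset.Icc 2 m,
      |∑ j ∈ window n m i,
          (lamTilde lam ((m : ℝ) * j / n - ((i : ℝ) - 2))) ^ 2 * (b j - b (j - 1))|
        ≤ C0 * Bmax := by
    intro i hi
    rw [Finset.mem_Icc] at hi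
    exact window_sum_bound (fun s => (lamTilde lam s) ^ 2) Mf L N a hMf hL ha0 haN
      hlipf m n i hi.1 hi.2 hmn b Bmax hb
  have hmR : (0:ℝ) < m := by exact_mod_cast hm
  have hgrid : gridNorm g 1 m = (m:ℝ)⁻¹ * ∑ i ∈ Finset.Icc 1 m, |g (((i:ℝ) - 1) / m)| := by
    simp [gridNorm]
  have hsum0 : 0 ≤ ∑ i ∈ Finset.Icc 1 m, |g (((i:ℝ) - 1) / m)| :=
    Finset.sum_nonneg fun i _ => abs_nonneg _
  calc |∑ i ∈ Finset.Icc 2 m, g (((i : ℝ) - 1) / m) *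
          ∑ j ∈ window n m i,
            (lamTilde lam ((m : ℝ) * j / n - ((i : ℝ) - 2))) ^ 2 * (b j - b (j - 1))|
      ≤ ∑ i ∈ Finset.Icc 2 m, |g (((i : ℝ) - 1) / m) *
          ∑ j ∈ window n m i,
            (lamTilde lam ((m : ℝ) * j / n - ((i : ℝ) - 2))) ^ 2 * (b j - b (j - 1))| :=
        Finset.abs_sum_le_sum_abs _ _
    _ ≤ ∑ i ∈ Finset.Icc 2 m, |g (((i : ℝ) - 1) / m)| * (C0 * Bmax) := by
        refine Finset.sum_le_sum fun i hi => ?_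
        rw [abs_mul]
        exact mul_le_mul_of_nonneg_left (hkey i hi) (abs_nonneg _)
    _ ≤ ∑ i ∈ Finset.Icc 1 m, |g (((i : ℝ) - 1) / m)| * (C0 * Bmax) := by
        refine Finset.sum_le_sum_of_subset_of_nonneg
          (Finset.Icc_subset_Icc (by omega) le_rfl) fun i _ _ => ?_
        positivity
    _ = C0 * Bmax * ∑ i ∈ Finset.Icc 1 m, |g (((i : ℝ) - 1) / m)| := by
        rw [← Finset.sum_mul]; ring
    _ ≤ (C0 + 1) * Bmax * ∑ i ∈ Finset.Icc 1 m, |g (((i : ℝ) - 1) / m)| := by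
        have : 0 ≤ Bmax * ∑ i ∈ Finset.Icc 1 m, |g (((i:ℝ) - 1) / m)| :=
          mul_nonneg hB0 hsum0
        nlinarith
    _ = (C0 + 1) * Bmax * m * gridNorm g 1 m := by
        rw [hgrid]
        field_simp
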